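/- arXiv:1209.1782 — 2 statements merged into one kernel-verified Lean document; each statement's English description precedes it below -/
import Mathlib

section
/- For constants ε, ν, μ with μ ≠ 0, the function u(x,t) = (−6ν²/(25εμ))·[1 + tanh(k(x + ct)) − (1/2)·sech²(k(x + ct))] with k = ν/(10μ) and c = 6ν²/(25μ) satisfies the KdV–Burgers equation u_t + ε·u·u_x − ν·u_xx + μ·u_xxx = 0 for all real x and t. (In the special case ε = 1 this is the stated traveling-wave solution u = (−6ν²/(25μ))[1 + tanh(k(x+ct)) − ½sech²(k(x+ct))].) -/
noncomputable section KdVBAux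

private def G (z : ℝ) : ℝ := 1 + Real.tanh z - (1/2) * (1 / Real.cosh z)^2
private def G1 (z : ℝ) : ℝ := (1 / Real.cosh z)^2 * (1 + Real.tanh z)
private def G2 (z : ℝ) : ℝ := (1 / Real.cosh z)^2 *
  ((1 / Real.cosh z)^2 - 2 * Real.tanh z - 2 * (Real.tanh z)^2)
private def G3 (z : ℝ) : ℝ := (1 / Real.cosh z)^2 *
  (4 * (Real.tanh z)^2 + 4 * (Real.tanh z)^3
    - 8 * (1 / Real.cosh z)^2 * Real.tanh z - 2 * (1 / Real.cosh z)^2)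

private lemma hasDerivAt_tanh (z : ℝ) :
    HasDerivAt Real.tanh ((1 / Real.cosh z)^2) z := by
  have h : HasDerivAt (fun x => Real.sinh x / Real.cosh x)
      ((Real.cosh z * Real.cosh z - Real.sinh z * Real.sinh z) / (Real.cosh z)^2) z :=
    (Real.hasDerivAt_sinh z).div (Real.hasDerivAt_cosh z) (Real.cosh_pos z).ne'
  have he : Real.tanh = fun x => Real.sinh x / Real.cosh x := by
    funext x; exact Real.tanh_eq_sinh_div_cosh x
  rw [he]
  convert h using 1
  have := Real.cosh_sq_sub_sinh_sq z
  field_simp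
  nlinarith [this]

private lemma hasDerivAt_sech2 (z : ℝ) :
    HasDerivAt (fun x => (1 / Real.cosh x)^2)
      (-2 * (1 / Real.cosh z)^2 * Real.tanh z) z := by
  have hc := Real.cosh_pos z
  have h : HasDerivAt (fun x => (1 / Real.cosh x)^2)
      (2 * (1 / Real.cosh z) ^ 1 * (-Real.sinh z / (Real.cosh z)^2)) z := by
    have hinv : HasDerivAt (fun x => 1 / Real.cosh x)
        ((0 * Real.cosh z - 1 * Real.sinh z) / (Real.cosh z)^2) z :=
      (hasDerivAt_const z (1:ℝ)).div (Real.hasDerivAt_cosh z) hc.ne'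
    simpa using hinv.fun_pow 2
  convert h using 1
  rw [Real.tanh_eq_sinh_div_cosh]
  field_simp

private lemma hasDerivAt_G (z : ℝ) : HasDerivAt G (G1 z) z := by
  have h := ((hasDerivAt_tanh z).const_add 1).sub ((hasDerivAt_sech2 z).const_mul (1/2))
  refine h.congr_deriv ?_
  unfold G1; ring

private lemma hasDerivAt_G1 (z : ℝ) : HasDerivAt G1 (G2 z) z := by
  have h := (hasDerivAt_sech2 z).mul ((hasDerivAt_tanh z).const_add 1)
  refine h.congr_deriv ?_
  unfold G2; ring

private lemma hasDerivAt_G2 (z : ℝ) : HasDerivAt G2 (G3 z) z := by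
  have h := (hasDerivAt_sech2 z).mul
    (((hasDerivAt_sech2 z).sub ((hasDerivAt_tanh z).const_mul 2)).sub
      (((hasDerivAt_tanh z).pow 2).const_mul 2))
  refine h.congr_deriv ?_
  unfold G3; simp only [Pi.sub_apply, Pi.pow_apply]; ring

private lemma sech2_eq (z : ℝ) : (1 / Real.cosh z)^2 = 1 - (Real.tanh z)^2 := by
  have hc := (Real.cosh_pos z).ne'
  have := Real.cosh_sq_sub_sinh_sq z
  rw [Real.tanh_eq_sinh_div_cosh]
  field_simp
  linarith

end KdVBAux

/-- The traveling wave u(x,t) = (−6ν²/(25εμ))·[1 + tanh(k(x+ct)) − ½sech²(k(x+ct))],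
    with k = ν/(10μ), c = 6ν²/(25μ), satisfies the KdV–Burgers equation
    u_t + ε u u_x − ν u_xx + μ u_xxx = 0. -/
theorem kdvb_traveling_wave_solution
    (ε ν μ : ℝ) (hμ : μ ≠ 0)
    (u : ℝ → ℝ → ℝ)
    (hu : ∀ x t, u x t =
      (-6 * ν^2 / (25 * ε * μ)) *
        (1 + Real.tanh ((ν / (10 * μ)) * (x + (6 * ν^2 / (25 * μ)) * t))
           - (1/2) * (1 / Real.cosh ((ν / (10 * μ)) * (x + (6 * ν^2 / (25 * μ)) * t)))^2)) :
    ∀ x t : ℝ,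
      deriv (fun s => u x s) t
        + ε * u x t * deriv (fun y => u y t) x
        - ν * iteratedDeriv 2 (fun y => u y t) x
        + μ * iteratedDeriv 3 (fun y => u y t) x = 0 := by
  intro x t
  set A : ℝ := -6 * ν^2 / (25 * ε * μ) with hA
  set k : ℝ := ν / (10 * μ) with hk
  set c : ℝ := 6 * ν^2 / (25 * μ) with hc
  have hu' : ∀ x t : ℝ, u x t = A * G (k * (x + c * t)) := by
    intro x t; rw [hu x t]; rfl
  -- derivative of the inner linear map in y
  have hlin : ∀ (y τ : ℝ), HasDerivAt (fun y' => k * (y' + c * τ)) k y := by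
    intro y τ
    simpa using ((hasDerivAt_id y).add_const (c * τ)).const_mul k
  have hlint : ∀ (y τ : ℝ), HasDerivAt (fun τ' => k * (y + c * τ')) (k * c) τ := by
    intro y τ
    simpa [mul_comm, mul_assoc, mul_left_comm] using
      (((hasDerivAt_id τ).const_mul c).const_add y).const_mul k
  -- x-derivatives at each order, as function equalities
  have hd1 : deriv (fun y => u y t) = fun y => A * k * G1 (k * (y + c * t)) := by
    funext y
    have : HasDerivAt (fun y' => u y' t) (A * k * G1 (k * (y + c * t))) y := by
      have h := ((hasDerivAt_G (k * (y + c * t))).comp y (hlin y t)).const_mul A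
      have he : (fun y' => u y' t) = fun y' => A * G (k * (y' + c * t)) := by
        funext y'; exact hu' y' t
      rw [he]
      refine h.congr_deriv ?_
      ring
    exact this.deriv
  have hd2 : deriv (deriv (fun y => u y t)) = fun y => A * k^2 * G2 (k * (y + c * t)) := by
    rw [hd1]
    funext y
    have : HasDerivAt (fun y' => A * k * G1 (k * (y' + c * t)))
        (A * k^2 * G2 (k * (y + c * t))) y := by
      have h := ((hasDerivAt_G1 (k * (y + c * t))).comp y (hlin y t)).const_mul (A * k)
      refine h.congr_deriv ?_
      ring
    exact this.deriv
  have hd3 : deriv (deriv (deriv (fun y => u y t))) =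
      fun y => A * k^3 * G3 (k * (y + c * t)) := by
    rw [hd2]
    funext y
    have : HasDerivAt (fun y' => A * k^2 * G2 (k * (y' + c * t)))
        (A * k^3 * G3 (k * (y + c * t))) y := by
      have h := ((hasDerivAt_G2 (k * (y + c * t))).comp y (hlin y t)).const_mul (A * k^2)
      refine h.congr_deriv ?_
      ring
    exact this.deriv
  -- time derivative
  have hdt : deriv (fun s => u x s) t = A * (k * c) * G1 (k * (x + c * t)) := by
    have he : (fun s => u x s) = fun s => A * G (k * (x + c * s)) := by
      funext s; exact hu' x s
    have h := ((hasDerivAt_G (k * (x + c * t))).comp t (hlint x t)).const_mul A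
    rw [he]
    refine h.deriv.trans ?_
    ring
  have hit2 : iteratedDeriv 2 (fun y => u y t) x = A * k^2 * G2 (k * (x + c * t)) := by
    rw [show (2:ℕ) = 1 + 1 from rfl, iteratedDeriv_succ, iteratedDeriv_one, hd2]
  have hit3 : iteratedDeriv 3 (fun y => u y t) x = A * k^3 * G3 (k * (x + c * t)) := by
    rw [show (3:ℕ) = 2 + 1 from rfl, iteratedDeriv_succ,
        show (2:ℕ) = 1 + 1 from rfl, iteratedDeriv_succ, iteratedDeriv_one, hd3]
  rw [hdt, hit2, hit3, hu' x t, congrFun hd1 x]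
  set z : ℝ := k * (x + c * t) with hz
  have hS : (1 / Real.cosh z)^2 = 1 - (Real.tanh z)^2 := sech2_eq z
  unfold G G1 G2 G3
  rw [hS]
  set T : ℝ := Real.tanh z
  rcases eq_or_ne ε 0 with hε | hε
  · have : A = 0 := by rw [hA, hε]; simp
    rw [this]; ring
  · rw [hA, hk, hc]
    field_simp
    ring
end

section
/- For h > 0 and integers i ≠ j, the third derivative of S(j,h)(x) = sinc((x − jh)/h) at x = ih equals (1/h³)·(−1)^(i−j)/(i−j)³·(6 − π²(i−j)²), and at x = jh the third derivative equals 0. -/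
open Real Topology Filter

private lemma aux_hasDerivAt_s1 {u : ℝ} (hu : u ≠ 0) :
    HasDerivAt (fun u : ℝ => Real.sin (π * u) / (π * u))
      (Real.cos (π * u) / u - Real.sin (π * u) / (π * u ^ 2)) u := by
  have hπ := Real.pi_ne_zero
  have h2 : HasDerivAt (fun u : ℝ => π * u) π u := by
    simpa using (hasDerivAt_id u).const_mul π
  have h1 : HasDerivAt (fun u : ℝ => Real.sin (π * u)) (Real.cos (π * u) * π) u := h2.sin
  have := h1.div h2 (mul_ne_zero hπ hu)
  refine this.congr_deriv ?_
  field_simp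

private lemma aux_hasDerivAt_s2 {u : ℝ} (hu : u ≠ 0) :
    HasDerivAt (fun u : ℝ => Real.cos (π * u) / u - Real.sin (π * u) / (π * u ^ 2))
      (-(π * Real.sin (π * u)) / u - 2 * Real.cos (π * u) / u ^ 2
        + 2 * Real.sin (π * u) / (π * u ^ 3)) u := by
  have hπ := Real.pi_ne_zero
  have h2 : HasDerivAt (fun u : ℝ => π * u) π u := by
    simpa using (hasDerivAt_id u).const_mul π
  have hsin : HasDerivAt (fun u : ℝ => Real.sin (π * u)) (Real.cos (π * u) * π) u := h2.sin
  have hcos : HasDerivAt (fun u : ℝ => Real.cos (π * u)) (-Real.sin (π * u) * π) u := h2.cos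
  have hid : HasDerivAt (fun u : ℝ => u) 1 u := hasDerivAt_id u
  have hp2 : HasDerivAt (fun u : ℝ => π * u ^ 2) (π * (2 * u)) u := by
    simpa using ((hasDerivAt_pow 2 u).const_mul π)
  have hA := hcos.div hid hu
  have hB := hsin.div hp2 (mul_ne_zero hπ (pow_ne_zero 2 hu))
  have := hA.sub hB
  refine this.congr_deriv ?_
  field_simp
  ring

private lemma aux_hasDerivAt_s3 {u : ℝ} (hu : u ≠ 0) :
    HasDerivAt (fun u : ℝ => -(π * Real.sin (π * u)) / u - 2 * Real.cos (π * u) / u ^ 2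
        + 2 * Real.sin (π * u) / (π * u ^ 3))
      (-(π ^ 2 * Real.cos (π * u)) / u + 3 * π * Real.sin (π * u) / u ^ 2
        + 6 * Real.cos (π * u) / u ^ 3 - 6 * Real.sin (π * u) / (π * u ^ 4)) u := by
  have hπ := Real.pi_ne_zero
  have h2 : HasDerivAt (fun u : ℝ => π * u) π u := by
    simpa using (hasDerivAt_id u).const_mul π
  have hsin : HasDerivAt (fun u : ℝ => Real.sin (π * u)) (Real.cos (π * u) * π) u := h2.sin
  have hcos : HasDerivAt (fun u : ℝ => Real.cos (π * u)) (-Real.sin (π * u) * π) u := h2.cos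
  have hid : HasDerivAt (fun u : ℝ => u) 1 u := hasDerivAt_id u
  have hA : HasDerivAt (fun u : ℝ => -(π * Real.sin (π * u)))
      (-(π * (Real.cos (π * u) * π))) u := (hsin.const_mul π).neg
  have hB : HasDerivAt (fun u : ℝ => 2 * Real.cos (π * u))
      (2 * (-Real.sin (π * u) * π)) u := hcos.const_mul 2
  have hC : HasDerivAt (fun u : ℝ => 2 * Real.sin (π * u))
      (2 * (Real.cos (π * u) * π)) u := hsin.const_mul 2
  have hp2 : HasDerivAt (fun u : ℝ => u ^ 2) (2 * u) u := by
    simpa using hasDerivAt_pow 2 u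
  have hp3 : HasDerivAt (fun u : ℝ => π * u ^ 3) (π * (3 * u ^ 2)) u := by
    simpa using ((hasDerivAt_pow 3 u).const_mul π)
  have h1 := hA.div hid hu
  have h2' := hB.div hp2 (pow_ne_zero 2 hu)
  have h3 := hC.div hp3 (mul_ne_zero hπ (pow_ne_zero 3 hu))
  have := (h1.sub h2').add h3
  refine this.congr_deriv ?_
  field_simp
  ring

private lemma aux_key (b h : ℝ) (hh : h ≠ 0) (a : ℝ) (ha : a ≠ b) :
    iteratedDeriv 3 (fun x : ℝ => Real.sin (π * ((x - b) / h)) / (π * ((x - b) / h))) a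
      = (-(π ^ 2 * Real.cos (π * ((a - b) / h))) / ((a - b) / h)
          + 3 * π * Real.sin (π * ((a - b) / h)) / ((a - b) / h) ^ 2
          + 6 * Real.cos (π * ((a - b) / h)) / ((a - b) / h) ^ 3
          - 6 * Real.sin (π * ((a - b) / h)) / (π * ((a - b) / h) ^ 4)) * (1 / h) ^ 3 := by
  set g : ℝ → ℝ := fun x => (x - b) / h with hg
  have hgd : ∀ x : ℝ, HasDerivAt g (1 / h) x := by
    intro x
    simpa [hg, div_eq_mul_inv, one_div] using ((hasDerivAt_id x).sub_const b).div_const h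
  have hgne : ∀ x : ℝ, x ≠ b → g x ≠ 0 := by
    intro x hx
    simp only [hg]
    exact div_ne_zero (sub_ne_zero.2 hx) hh
  set G0 : ℝ → ℝ := fun x => Real.sin (π * g x) / (π * g x) with hG0
  set G1 : ℝ → ℝ := fun x =>
    (Real.cos (π * g x) / g x - Real.sin (π * g x) / (π * (g x) ^ 2)) * (1 / h) with hG1
  set G2 : ℝ → ℝ := fun x =>
    (-(π * Real.sin (π * g x)) / g x - 2 * Real.cos (π * g x) / (g x) ^ 2
      + 2 * Real.sin (π * g x) / (π * (g x) ^ 3)) * (1 / h) * (1 / h) with hG2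
  set G3 : ℝ → ℝ := fun x =>
    (-(π ^ 2 * Real.cos (π * g x)) / g x + 3 * π * Real.sin (π * g x) / (g x) ^ 2
      + 6 * Real.cos (π * g x) / (g x) ^ 3
      - 6 * Real.sin (π * g x) / (π * (g x) ^ 4)) * (1 / h) * (1 / h) * (1 / h) with hG3
  have hd1 : ∀ x : ℝ, x ≠ b → HasDerivAt G0 (G1 x) x := fun x hx =>
    (aux_hasDerivAt_s1 (hgne x hx)).comp x (hgd x)
  have hd2 : ∀ x : ℝ, x ≠ b → HasDerivAt G1 (G2 x) x := fun x hx =>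
    ((aux_hasDerivAt_s2 (hgne x hx)).comp x (hgd x)).mul_const (1 / h)
  have hd3 : ∀ x : ℝ, x ≠ b → HasDerivAt G2 (G3 x) x := fun x hx =>
    ((((aux_hasDerivAt_s3 (hgne x hx)).comp x (hgd x)).mul_const (1 / h)).mul_const (1 / h))
  have hev : ∀ᶠ x in 𝓝 a, x ≠ b := eventually_ne_nhds ha
  have E1 : deriv G0 =ᶠ[𝓝 a] G1 := hev.mono fun x hx => (hd1 x hx).deriv
  have E2 : deriv G1 =ᶠ[𝓝 a] G2 := hev.mono fun x hx => (hd2 x hx).deriv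
  have : iteratedDeriv 3 G0 a = G3 a := by
    rw [iteratedDeriv_succ', E1.iteratedDeriv_eq, iteratedDeriv_succ',
      E2.iteratedDeriv_eq, iteratedDeriv_one]
    exact (hd3 a ha).deriv
  rw [this]
  simp only [hG3]
  ring

/-- Third derivative of S(j,h)(x) = sinc((x − jh)/h) at the nodes:
    (1/h³)·(−1)^(i−j)/(i−j)³·(6 − π²(i−j)²) at x = ih for i ≠ j, and 0 at x = jh. -/
theorem sinc_translate_third_deriv_at_nodes
    (sinc : ℝ → ℝ)
    (hsinc : ∀ x : ℝ, x ≠ 0 → sinc x = Real.sin (Real.pi * x) / (Real.pi * x))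
    (hsinc0 : sinc 0 = 1)
    (h : ℝ) (hh : h > 0) (j : ℤ) :
    (∀ i : ℤ, i ≠ j →
      iteratedDeriv 3 (fun x : ℝ => sinc ((x - (j : ℝ) * h) / h)) ((i : ℝ) * h)
        = (1 / h ^ 3) * ((-1 : ℝ) ^ (i - j) / ((i : ℝ) - (j : ℝ)) ^ 3)
            * (6 - Real.pi ^ 2 * ((i : ℝ) - (j : ℝ)) ^ 2))
      ∧ iteratedDeriv 3 (fun x : ℝ => sinc ((x - (j : ℝ) * h) / h)) ((j : ℝ) * h) = 0 := by
  have hh' : h ≠ 0 := ne_of_gt hh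
  constructor
  · intro i hij
    have hab : (i : ℝ) * h ≠ (j : ℝ) * h := by
      have : (i : ℝ) ≠ (j : ℝ) := by exact_mod_cast hij
      exact fun hc => this (mul_right_cancel₀ hh' hc)
    have hfg : (fun x : ℝ => sinc ((x - (j : ℝ) * h) / h))
        =ᶠ[𝓝 ((i : ℝ) * h)] fun x : ℝ =>
          Real.sin (π * ((x - (j : ℝ) * h) / h)) / (π * ((x - (j : ℝ) * h) / h)) := by
      refine (eventually_ne_nhds hab).mono fun x hx => ?_
      exact hsinc _ (div_ne_zero (sub_ne_zero.2 hx) hh')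
    rw [hfg.iteratedDeriv_eq, aux_key ((j : ℝ) * h) h hh' _ hab]
    have hu : ((i : ℝ) * h - (j : ℝ) * h) / h = ((i : ℝ) - (j : ℝ)) := by
      field_simp
    rw [hu]
    have hk : ((i : ℝ) - (j : ℝ)) = ((i - j : ℤ) : ℝ) := by push_cast; ring
    have hsin0 : Real.sin (π * ((i : ℝ) - (j : ℝ))) = 0 := by
      rw [hk, mul_comm]; exact Real.sin_int_mul_pi _
    have hcosv : Real.cos (π * ((i : ℝ) - (j : ℝ))) = (-1 : ℝ) ^ (i - j) := by
      rw [hk, mul_comm]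
      simpa using Real.cos_add_int_mul_pi 0 (i - j)
    have hkne : ((i : ℝ) - (j : ℝ)) ≠ 0 := by
      rw [hk]
      exact_mod_cast sub_ne_zero.2 hij
    rw [hsin0, hcosv]
    field_simp
    ring
  · set b : ℝ := (j : ℝ) * h with hb
    set g : ℝ → ℝ := fun t => sinc (t / h) with hgdef
    have hφ : (fun x : ℝ => sinc ((x - b) / h)) = fun z => g (z + -b) := by
      funext z; simp [hgdef, sub_eq_add_neg]
    have h1 : iteratedDeriv 3 (fun x : ℝ => sinc ((x - b) / h)) b = iteratedDeriv 3 g 0 := by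
      rw [hφ, iteratedDeriv_comp_add_const]
      simp
    have geven : (fun t : ℝ => g (-t)) = g := by
      funext t
      by_cases ht : t = 0
      · simp [ht]
      · have h1' : -t / h ≠ 0 := div_ne_zero (neg_ne_zero.2 ht) hh'
        have h2' : t / h ≠ 0 := div_ne_zero ht hh'
        simp only [hgdef]
        rw [hsinc _ h1', hsinc _ h2']
        rw [neg_div, mul_neg, Real.sin_neg]
        ring
    have h2 : iteratedDeriv 3 g 0 = -iteratedDeriv 3 g 0 := by
      conv_lhs => rw [← geven]
      rw [iteratedDeriv_comp_neg]
      simp only [neg_zero, smul_eq_mul]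
      ring
    rw [h1]
    linarith [h2]
end
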